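/- (Equality case of Bellman's inequality.) Let n ≥ 2, let a = (a₁, …, aₙ) and b = (b₁, …, bₙ) be two finite sequences of positive real numbers, and let p > 1 be a real number. Assume a₁^p − Σ_{i=2}^{n} aᵢ^p > 0 and b₁^p − Σ_{i=2}^{n} bᵢ^p > 0. Then equality (a₁^p − Σ_{i=2}^{n} aᵢ^p)^{1/p} + (b₁^p − Σ_{i=2}^{n} bᵢ^p)^{1/p} = ((a₁ + b₁)^p − Σ_{i=2}^{n} (aᵢ + bᵢ)^p)^{1/p} holds if and only if there is a positive constant υ with aᵢ = υ · bᵢ for all i = 1, …, n. -/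

import Mathlib

open Finset

/-- Equality case of Bellman's inequality (Lemma 3 of the paper): under the same
hypotheses, equality holds if and only if the sequence `a` is a positive multiple
of the sequence `b`. -/
theorem stmt_4 (n : ℕ) (hn : 2 ≤ n) (a b : ℕ → ℝ)
    (ha : ∀ i ∈ Finset.Icc 1 n, 0 < a i)
    (hb : ∀ i ∈ Finset.Icc 1 n, 0 < b i)
    (p : ℝ) (hp : 1 < p)
    (hA : 0 < a 1 ^ p - ∑ i ∈ Finset.Icc 2 n, a i ^ p)
    (hB : 0 < b 1 ^ p - ∑ i ∈ Finset.Icc 2 n, b i ^ p) :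
    (a 1 ^ p - ∑ i ∈ Finset.Icc 2 n, a i ^ p) ^ (1 / p)
        + (b 1 ^ p - ∑ i ∈ Finset.Icc 2 n, b i ^ p) ^ (1 / p)
        = ((a 1 + b 1) ^ p - ∑ i ∈ Finset.Icc 2 n, (a i + b i) ^ p) ^ (1 / p)
      ↔ ∃ υ : ℝ, 0 < υ ∧ ∀ i ∈ Finset.Icc 1 n, a i = υ * b i := by
  have hp0 : (0:ℝ) < p := lt_trans one_pos hp
  have hpne : p ≠ 0 := ne_of_gt hp0
  have hinv : (1/p) * p = 1 := by field_simp
  have h1n : (1:ℕ) ∈ Finset.Icc 1 n := by simp; omega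
  have ha1 : 0 < a 1 := ha 1 h1n
  have hb1 : 0 < b 1 := hb 1 h1n
  have h1s : (1:ℕ) ∉ Finset.Icc 2 n := by simp
  have hins : Finset.Icc 1 n = insert 1 (Finset.Icc 2 n) := by
    ext i; simp; omega
  have hsub : ∀ i ∈ Finset.Icc 2 n, i ∈ Finset.Icc 1 n := by
    intro i hi; simp only [Finset.mem_Icc] at hi ⊢; omega
  constructor
  · -- forward: equality implies proportional
    intro heq
    set A := (a 1 ^ p - ∑ i ∈ Finset.Icc 2 n, a i ^ p) ^ (1/p) with hAdef
    set B := (b 1 ^ p - ∑ i ∈ Finset.Icc 2 n, b i ^ p) ^ (1/p) with hBdef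
    have hApos : 0 < A := Real.rpow_pos_of_pos hA _
    have hBpos : 0 < B := Real.rpow_pos_of_pos hB _
    have hAp : A ^ p = a 1 ^ p - ∑ i ∈ Finset.Icc 2 n, a i ^ p := by
      rw [hAdef, ← Real.rpow_mul hA.le, hinv, Real.rpow_one]
    have hBp : B ^ p = b 1 ^ p - ∑ i ∈ Finset.Icc 2 n, b i ^ p := by
      rw [hBdef, ← Real.rpow_mul hB.le, hinv, Real.rpow_one]
    set f : ℕ → ℝ := fun i => if i = 1 then A else a i with hf
    set g : ℕ → ℝ := fun i => if i = 1 then B else b i with hg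
    have hfpos : ∀ i ∈ Finset.Icc 1 n, 0 < f i := by
      intro i hi
      by_cases h : i = 1
      · simp only [hf, h, if_pos]; exact hApos
      · simp only [hf, if_neg h]; exact ha i hi
    have hgpos : ∀ i ∈ Finset.Icc 1 n, 0 < g i := by
      intro i hi
      by_cases h : i = 1
      · simp only [hg, h, if_pos]; exact hBpos
      · simp only [hg, if_neg h]; exact hb i hi
    have hsumf : ∑ i ∈ Finset.Icc 1 n, f i ^ p = a 1 ^ p := by
      rw [hins, Finset.sum_insert h1s]
      have h2 : ∑ i ∈ Finset.Icc 2 n, f i ^ p = ∑ i ∈ Finset.Icc 2 n, a i ^ p := by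
        refine Finset.sum_congr rfl fun i hi => ?_
        have hne : i ≠ 1 := by simp only [Finset.mem_Icc] at hi; omega
        simp only [hf, if_neg hne]
      rw [h2, show f 1 = A from if_pos rfl, hAp]; ring
    have hsumg : ∑ i ∈ Finset.Icc 1 n, g i ^ p = b 1 ^ p := by
      rw [hins, Finset.sum_insert h1s]
      have h2 : ∑ i ∈ Finset.Icc 2 n, g i ^ p = ∑ i ∈ Finset.Icc 2 n, b i ^ p := by
        refine Finset.sum_congr rfl fun i hi => ?_
        have hne : i ≠ 1 := by simp only [Finset.mem_Icc] at hi; omega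
        simp only [hg, if_neg hne]
      rw [h2, show g 1 = B from if_pos rfl, hBp]; ring
    have hcd : 0 < a 1 + b 1 := by positivity
    set lam := a 1 / (a 1 + b 1) with hlam
    set mu := b 1 / (a 1 + b 1) with hmu
    have hlam0 : 0 < lam := by positivity
    have hmu0 : 0 < mu := by positivity
    have hlammu : lam + mu = 1 := by rw [hlam, hmu]; field_simp
    have hsplit : ∀ i ∈ Finset.Icc 1 n,
        f i + g i = (a 1 + b 1) * (lam * (f i / a 1) + mu * (g i / b 1)) := by
      intro i hi
      rw [hlam, hmu]; field_simp
    have key : ∀ i ∈ Finset.Icc 1 n,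
        (f i + g i) ^ p
          ≤ (a 1 + b 1) ^ p * (lam * (f i / a 1) ^ p + mu * (g i / b 1) ^ p) := by
      intro i hi
      have hu0 : (0:ℝ) ≤ f i / a 1 := div_nonneg (hfpos i hi).le ha1.le
      have hv0 : (0:ℝ) ≤ g i / b 1 := div_nonneg (hgpos i hi).le hb1.le
      have hconv := (convexOn_rpow hp.le).2 (Set.mem_Ici.2 hu0) (Set.mem_Ici.2 hv0)
        hlam0.le hmu0.le hlammu
      simp only [smul_eq_mul] at hconv
      rw [hsplit i hi, Real.mul_rpow hcd.le
        (add_nonneg (mul_nonneg hlam0.le hu0) (mul_nonneg hmu0.le hv0))]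
      exact mul_le_mul_of_nonneg_left hconv (Real.rpow_pos_of_pos hcd p).le
    have hsum_u : ∑ i ∈ Finset.Icc 1 n, (f i / a 1) ^ p = 1 := by
      have h2 : ∀ i ∈ Finset.Icc 1 n, (f i / a 1) ^ p = f i ^ p / a 1 ^ p :=
        fun i hi => Real.div_rpow (hfpos i hi).le ha1.le p
      rw [Finset.sum_congr rfl h2, ← Finset.sum_div, hsumf, div_self (by positivity)]
    have hsum_v : ∑ i ∈ Finset.Icc 1 n, (g i / b 1) ^ p = 1 := by
      have h2 : ∀ i ∈ Finset.Icc 1 n, (g i / b 1) ^ p = g i ^ p / b 1 ^ p :=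
        fun i hi => Real.div_rpow (hgpos i hi).le hb1.le p
      rw [Finset.sum_congr rfl h2, ← Finset.sum_div, hsumg, div_self (by positivity)]
    have hsum_rhs : ∑ i ∈ Finset.Icc 1 n,
        (a 1 + b 1) ^ p * (lam * (f i / a 1) ^ p + mu * (g i / b 1) ^ p)
        = (a 1 + b 1) ^ p := by
      rw [← Finset.mul_sum, Finset.sum_add_distrib, ← Finset.mul_sum, ← Finset.mul_sum,
        hsum_u, hsum_v, mul_one, mul_one, hlammu, mul_one]
    have hsum_lhs : ∑ i ∈ Finset.Icc 1 n, (f i + g i) ^ p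
        = (A + B) ^ p + ∑ i ∈ Finset.Icc 2 n, (a i + b i) ^ p := by
      have h2 : ∑ i ∈ Finset.Icc 2 n, (f i + g i) ^ p
          = ∑ i ∈ Finset.Icc 2 n, (a i + b i) ^ p := by
        refine Finset.sum_congr rfl fun i hi => ?_
        have hne : i ≠ 1 := by simp only [Finset.mem_Icc] at hi; omega
        simp only [hf, hg, if_neg hne]
      rw [hins, Finset.sum_insert h1s, h2]
      simp [hf, hg]
    have hle : ∑ i ∈ Finset.Icc 1 n, (f i + g i) ^ p ≤ (a 1 + b 1) ^ p := by
      calc ∑ i ∈ Finset.Icc 1 n, (f i + g i) ^ p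
          ≤ ∑ i ∈ Finset.Icc 1 n,
              (a 1 + b 1) ^ p * (lam * (f i / a 1) ^ p + mu * (g i / b 1) ^ p) :=
            Finset.sum_le_sum key
        _ = (a 1 + b 1) ^ p := hsum_rhs
    have hABpos : 0 < A + B := by positivity
    have hABp : 0 < (A + B) ^ p := Real.rpow_pos_of_pos hABpos _
    have hCpos : 0 < (a 1 + b 1) ^ p - ∑ i ∈ Finset.Icc 2 n, (a i + b i) ^ p := by
      rw [hsum_lhs] at hle; linarith
    have hCeq : (A + B) ^ p
        = (a 1 + b 1) ^ p - ∑ i ∈ Finset.Icc 2 n, (a i + b i) ^ p := by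
      have h2 : (A + B) ^ p
          = (((a 1 + b 1) ^ p - ∑ i ∈ Finset.Icc 2 n, (a i + b i) ^ p) ^ (1/p)) ^ p := by
        rw [heq]
      rw [← Real.rpow_mul hCpos.le, hinv, Real.rpow_one] at h2
      exact h2
    have htotal : ∑ i ∈ Finset.Icc 1 n, (f i + g i) ^ p
        = ∑ i ∈ Finset.Icc 1 n,
            (a 1 + b 1) ^ p * (lam * (f i / a 1) ^ p + mu * (g i / b 1) ^ p) := by
      rw [hsum_lhs, hsum_rhs]; linarith
    have htermwise := (Finset.sum_eq_sum_iff_of_le key).1 htotal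
    have hprop : ∀ i ∈ Finset.Icc 1 n, f i / a 1 = g i / b 1 := by
      intro i hi
      by_contra hne
      have hu0 : (0:ℝ) ≤ f i / a 1 := div_nonneg (hfpos i hi).le ha1.le
      have hv0 : (0:ℝ) ≤ g i / b 1 := div_nonneg (hgpos i hi).le hb1.le
      have hstrict := (strictConvexOn_rpow hp).2 (Set.mem_Ici.2 hu0) (Set.mem_Ici.2 hv0)
        hne hlam0 hmu0 hlammu
      simp only [smul_eq_mul] at hstrict
      have heqi := htermwise i hi
      rw [hsplit i hi, Real.mul_rpow hcd.le
        (add_nonneg (mul_nonneg hlam0.le hu0) (mul_nonneg hmu0.le hv0))] at heqi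
      have hpow : (0:ℝ) < (a 1 + b 1) ^ p := Real.rpow_pos_of_pos hcd _
      nlinarith [hstrict, hpow]
    refine ⟨a 1 / b 1, div_pos ha1 hb1, fun i hi => ?_⟩
    rcases eq_or_ne i 1 with h | h
    · subst h; field_simp
    · have h2 := hprop i hi
      simp only [hf, hg, if_neg h] at h2
      rw [div_eq_div_iff ha1.ne' hb1.ne'] at h2
      field_simp
      linarith
  · -- backward: proportional implies equality
    rintro ⟨υ, hυ, hab⟩
    have hab1 : a 1 = υ * b 1 := hab 1 h1n
    have hS' : a 1 ^ p - ∑ i ∈ Finset.Icc 2 n, a i ^ p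
        = υ ^ p * (b 1 ^ p - ∑ i ∈ Finset.Icc 2 n, b i ^ p) := by
      have h2 : ∑ i ∈ Finset.Icc 2 n, a i ^ p
          = υ ^ p * ∑ i ∈ Finset.Icc 2 n, b i ^ p := by
        rw [Finset.mul_sum]
        refine Finset.sum_congr rfl fun i hi => ?_
        rw [hab i (hsub i hi), Real.mul_rpow hυ.le (hb i (hsub i hi)).le]
      rw [h2, hab1, Real.mul_rpow hυ.le hb1.le]; ring
    have hC' : (a 1 + b 1) ^ p - ∑ i ∈ Finset.Icc 2 n, (a i + b i) ^ p
        = (υ + 1) ^ p * (b 1 ^ p - ∑ i ∈ Finset.Icc 2 n, b i ^ p) := by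
      have h2 : ∑ i ∈ Finset.Icc 2 n, (a i + b i) ^ p
          = (υ + 1) ^ p * ∑ i ∈ Finset.Icc 2 n, b i ^ p := by
        rw [Finset.mul_sum]
        refine Finset.sum_congr rfl fun i hi => ?_
        rw [hab i (hsub i hi), show υ * b i + b i = (υ + 1) * b i by ring,
          Real.mul_rpow (by linarith : (0:ℝ) ≤ υ + 1) (hb i (hsub i hi)).le]
      rw [h2, hab1, show υ * b 1 + b 1 = (υ + 1) * b 1 by ring,
        Real.mul_rpow (by linarith : (0:ℝ) ≤ υ + 1) hb1.le]; ring
    rw [hS', hC', Real.mul_rpow (Real.rpow_nonneg hυ.le p) hB.le,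
      Real.mul_rpow (Real.rpow_nonneg (by linarith : (0:ℝ) ≤ υ + 1) p) hB.le,
      ← Real.rpow_mul hυ.le, ← Real.rpow_mul (by linarith : (0:ℝ) ≤ υ + 1),
      mul_one_div, div_self hpne, Real.rpow_one, Real.rpow_one]
    ring
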